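/- Let X be a finite indecomposable quandle, let x₀ ∈ X, let G = Inn(X), let H = Stab_G(x₀), and let z = φ_{x₀}. Equip G with the quandle operation x ▷ y = x·z·x⁻¹·y·z⁻¹ and let e : G → X, g ↦ g(x₀), be the evaluation map. Then for all x, y ∈ G one has e(x) = e(y) if and only if xH = yH; consequently e induces a bijection G/H → X, xH ↦ e(x), which is an isomorphism of quandles when G/H carries the well-defined operation xH ▷ yH = x·z·x⁻¹·y·z⁻¹·H. In particular X is isomorphic to the homogeneous quandle (G, H, I_z), where I_z is conjugation by z. -/

import Mathlib

open Quandles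

/-- The inner group of a rack: the subgroup of the permutation group of `X`
generated by the left-translation permutations `φᵢ = Rack.act' i`. -/
def innerGroup (X : Type*) [Rack X] : Subgroup (Equiv.Perm X) :=
  Subgroup.closure (Set.range fun i : X => Rack.act' i)

lemma inner_hom {X : Type*} [Rack X] {g : Equiv.Perm X} (hg : g ∈ innerGroup X) :
    ∀ a b : X, g (a ◃ b) = g a ◃ g b := by
  induction hg using Subgroup.closure_induction with
  | mem g hg =>
    obtain ⟨i, rfl⟩ := hg
    intro a b
    simp only [Rack.act'_apply]
    exact Rack.self_distrib (x := i) (y := a) (z := b)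
  | one => intro a b; rfl
  | mul g h _ _ ihg ihh => intro a b; simp [Equiv.Perm.mul_apply, ihh, ihg]
  | inv g _ ih =>
    intro a b
    apply g.injective
    simp only [Equiv.Perm.coe_inv, Equiv.apply_symm_apply, ih]

/-- Let `X` be a finite indecomposable quandle, `x₀ ∈ X`, `G = Inn(X)`,
`H = Stab_G(x₀)`, `z = φ_{x₀}`, and let `e : G → X`, `g ↦ g(x₀)`.  Then
`e x = e y ↔ xH = yH`; consequently `e` induces a bijection `f : G/H → X`,
the operation `xH ▷ yH = x·z·x⁻¹·y·z⁻¹·H` on `G/H` is well defined, and `f`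
is an isomorphism from the homogeneous quandle `(G, H, I_z)` to `X`. -/
theorem stmt2 {X : Type*} [Fintype X] [Quandle X]
    (hconn : ∀ x y : X, ∃ g ∈ innerGroup X, g x = y) (x₀ : X)
    (z : innerGroup X) (hz : (z : Equiv.Perm X) = Rack.act' x₀)
    (H : Subgroup ↥(innerGroup X))
    (hH : ∀ g : innerGroup X, g ∈ H ↔ (g : Equiv.Perm X) x₀ = x₀) :
    let e : innerGroup X → X := fun g => (g : Equiv.Perm X) x₀
    (∀ x y : innerGroup X,
      e x = e y ↔ (QuotientGroup.mk x : ↥(innerGroup X) ⧸ H) = QuotientGroup.mk y) ∧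
    (∀ x x' y y' : innerGroup X,
      (QuotientGroup.mk x : ↥(innerGroup X) ⧸ H) = QuotientGroup.mk x' →
      (QuotientGroup.mk y : ↥(innerGroup X) ⧸ H) = QuotientGroup.mk y' →
      (QuotientGroup.mk (x * z * x⁻¹ * y * z⁻¹) : ↥(innerGroup X) ⧸ H) =
        QuotientGroup.mk (x' * z * x'⁻¹ * y' * z⁻¹)) ∧
    ∃ f : (↥(innerGroup X) ⧸ H) → X, Function.Bijective f ∧
      (∀ x : innerGroup X, f (QuotientGroup.mk x) = e x) ∧
      (∀ x y : innerGroup X,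
        f (QuotientGroup.mk (x * z * x⁻¹ * y * z⁻¹)) =
          f (QuotientGroup.mk x) ◃ f (QuotientGroup.mk y)) := by
  intro e
  have hz0 : (z : Equiv.Perm X) x₀ = x₀ := by
    rw [hz, Rack.act'_apply, Quandle.fix]
  have hzinv : ((z : Equiv.Perm X))⁻¹ x₀ = x₀ := by
    conv_lhs => rw [← hz0]
    exact Equiv.symm_apply_apply _ _
  have key : ∀ x y : innerGroup X, e x = e y ↔
      (QuotientGroup.mk x : ↥(innerGroup X) ⧸ H) = QuotientGroup.mk y := by
    intro x y
    rw [QuotientGroup.eq, hH]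
    simp only [e, Subgroup.coe_mul, InvMemClass.coe_inv, Equiv.Perm.mul_apply]
    constructor
    · intro h; rw [← h]; exact Equiv.symm_apply_apply _ _
    · intro h
      have := congrArg (x : Equiv.Perm X) h
      simpa using this.symm
  have key2 : ∀ x y : innerGroup X, e (x * z * x⁻¹ * y * z⁻¹) = e x ◃ e y := by
    intro x y
    simp only [e, Subgroup.coe_mul, InvMemClass.coe_inv, Equiv.Perm.mul_apply, hzinv]
    rw [hz, Rack.act'_apply]
    rw [inner_hom x.2 x₀ (((x : Equiv.Perm X))⁻¹ ((y : Equiv.Perm X) x₀))]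
    simp
  refine ⟨key, ?_, ?_⟩
  · intro x x' y y' hx hy
    rw [← key] at hx hy ⊢
    rw [key2, key2, hx, hy]
  · refine ⟨fun q => Quotient.liftOn' q e ?_, ?_, fun x => rfl, ?_⟩
    · intro a b hab
      rw [key]
      exact Quotient.sound' hab
    · constructor
      · intro a b
        induction a using QuotientGroup.induction_on
        induction b using QuotientGroup.induction_on
        intro h
        exact (key _ _).mp h
      · intro t
        obtain ⟨g, hg, hgt⟩ := hconn x₀ t
        exact ⟨QuotientGroup.mk ⟨g, hg⟩, hgt⟩
    · intro x y
      exact key2 x y
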